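/- Let (Ω, F, P) be a probability space with a filtration φ_0 ⊆ φ_1 ⊆ ⋯ ⊆ φ_m of sub-σ-algebras of F. Let Y_1, …, Y_m be random variables taking values in {−1, 0, 1} with each Y_i measurable with respect to φ_i. Let E_0, E_1, …, E_{m−1} be events with each E_i ∈ φ_i, and let E = ⋂_{i=0}^{m−1} E_i. Let r_0 < r_1 be integers, let R_0 = r_0 (a constant), and for t = 1, …, m set R_t = r_0 + Σ_{i=1}^t Y_i. Let 0 ≤ p ≤ 1/3 and suppose that p·m ≥ 2(r_1 − r_0). Assume that for each i = 1, …, m: P(Y_i = 1 | φ_{i−1}) ≥ 2p almost everywhere on E_{i−1} ∩ {R_{i−1} < r_1}, and P(Y_i = −1 | φ_{i−1}) ≤ p almost everywhere on E_{i−1} ∩ {R_{i−1} < r_1}. Then P(E ∩ {R_t < r_1 for all t ∈ {1, …, m}}) ≤ exp(−p·m / 28). -/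

import Mathlib

open MeasureTheory
set_option maxHeartbeats 2000000

lemma exp_num : 2 * Real.exp (-(1/7 : ℝ)) + Real.exp (1/7) ≤ 81/28 := by
  have h1 := Real.exp_bound (x := (1/7 : ℝ)) (by rw [abs_of_nonneg] <;> norm_num) (n := 4) (by norm_num)
  have h2 := Real.exp_bound (x := (-(1/7) : ℝ)) (by rw [abs_of_nonpos] <;> norm_num) (n := 4) (by norm_num)
  rw [abs_le] at h1 h2
  simp only [Finset.sum_range_succ, Finset.sum_range_zero] at h1 h2
  norm_num [Nat.factorial] at h1 h2 ⊢
  linarith [h1.1, h1.2, h2.1, h2.2]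

theorem drift_walk_hits_r1
    {Ω : Type*} {F : MeasurableSpace Ω} (P : Measure Ω) [IsProbabilityMeasure P]
    (m : ℕ)
    (φ : ℕ → MeasurableSpace Ω) (hφ_mono : Monotone φ) (hφ_le : ∀ i, φ i ≤ F)
    (Y : ℕ → Ω → ℤ) (hY_range : ∀ i ω, Y i ω ∈ ({-1, 0, 1} : Set ℤ))
    (hY_meas : ∀ i, Measurable[φ i] (Y i))
    (E : ℕ → Set Ω) (hE : ∀ i, MeasurableSet[φ i] (E i))
    (r0 r1 : ℤ) (hr : r0 < r1)
    (R : ℕ → Ω → ℤ)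
    (hR : ∀ t ω, R t ω = r0 + ∑ i ∈ Finset.Icc 1 t, Y i ω)
    (p : ℝ) (hp0 : 0 ≤ p) (hp3 : p ≤ 1 / 3)
    (hpm : 2 * ((r1 : ℝ) - r0) ≤ p * m)
    (hup : ∀ i : ℕ, 1 ≤ i → i ≤ m →
      ∀ᵐ ω ∂P, (ω ∈ E (i - 1) ∧ R (i - 1) ω < r1) →
        2 * p ≤ (P[Set.indicator {ω' | Y i ω' = 1} (fun _ => (1 : ℝ)) | φ (i - 1)]) ω)
    (hdown : ∀ i : ℕ, 1 ≤ i → i ≤ m →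
      ∀ᵐ ω ∂P, (ω ∈ E (i - 1) ∧ R (i - 1) ω < r1) →
        (P[Set.indicator {ω' | Y i ω' = -1} (fun _ => (1 : ℝ)) | φ (i - 1)]) ω ≤ p) :
    P ((⋂ i ∈ Finset.range m, E i) ∩ {ω | ∀ t, 1 ≤ t → t ≤ m → R t ω < r1})
      ≤ ENNReal.ofReal (Real.exp (-(p * m) / 28)) := by
  -- basic facts
  have hr1 : (1 : ℝ) ≤ (r1 : ℝ) - (r0 : ℝ) := by
    have h : r0 + 1 ≤ r1 := hr
    have h' : ((r0 + 1 : ℤ) : ℝ) ≤ ((r1 : ℤ) : ℝ) := by exact_mod_cast h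
    push_cast at h'; linarith
  have hm1 : 1 ≤ m := by
    by_contra h
    push_neg at h
    interval_cases m
    simp at hpm; linarith
  set θ : ℝ := 1/7 with hθdef
  have hθpos : 0 < θ := by norm_num [hθdef]
  set c1 : ℝ := Real.exp (-θ) - 1 with hc1def
  set c2 : ℝ := Real.exp θ - 1 with hc2def
  have hc1neg : c1 ≤ 0 := by
    have := Real.exp_lt_one_iff.mpr (by linarith : -θ < 0)
    simp [hc1def]; linarith
  have hc2pos : 0 ≤ c2 := by
    have := Real.one_le_exp (le_of_lt hθpos)
    simp [hc2def]; linarith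
  set ρ : ℝ := 1 + 2 * p * c1 + p * c2 with hρdef
  have hρ0 : 0 ≤ ρ := by
    have h1 : 0 < Real.exp (-θ) := Real.exp_pos _
    have : -1 ≤ c1 := by simp [hc1def]; linarith
    nlinarith
  -- the events
  set A : ℕ → Set Ω := fun t =>
    (⋂ i ∈ Finset.range (min (t+1) m), E i) ∩ {ω | ∀ s, 1 ≤ s → s ≤ t → R s ω < r1}
    with hAdef
  have hR_meas : ∀ t, Measurable[φ t] (R t) := by
    intro t
    have : R t = fun ω => r0 + ∑ i ∈ Finset.Icc 1 t, Y i ω := funext fun ω => hR t ω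
    rw [this]
    refine Measurable.add measurable_const (Finset.measurable_sum _ fun i hi => ?_)
    have hit : i ≤ t := (Finset.mem_Icc.mp hi).2
    exact (hY_meas i).mono (hφ_mono hit) le_rfl
  have hA_mble : ∀ t, MeasurableSet[φ t] (A t) := by
    intro t
    refine MeasurableSet.inter ?_ ?_
    · refine MeasurableSet.biInter (Set.to_countable _) fun i hi => ?_
      have : i ≤ t := by
        have := Finset.mem_range.mp hi
        omega
      exact (hφ_mono this) _ (hE i)
    · have : {ω | ∀ s, 1 ≤ s → s ≤ t → R s ω < r1}
          = ⋂ s ∈ Finset.Icc 1 t, {ω | R s ω < r1} := by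
        ext ω; simp [Finset.mem_Icc]
      rw [this]
      refine MeasurableSet.biInter (Set.to_countable _) fun s hs => ?_
      have hst : s ≤ t := (Finset.mem_Icc.mp hs).2
      have : Measurable[φ t] (R s) := ((hR_meas s).mono (hφ_mono hst) le_rfl)
      exact this measurableSet_Iio
  have hA_sub : ∀ t, A (t+1) ⊆ A t := by
    intro t ω hω
    refine ⟨Set.mem_iInter₂.mpr fun i hi => ?_, fun s hs1 hs2 => hω.2 s hs1 (by omega)⟩
    refine Set.mem_iInter₂.mp hω.1 i ?_
    simp only [Finset.mem_range] at hi ⊢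
    omega
  have hR0 : ∀ ω, R 0 ω = r0 := by
    intro ω; rw [hR]; simp
  have hA_mem : ∀ t, t < m → ∀ ω, ω ∈ A t → ω ∈ E t ∧ R t ω < r1 := by
    intro t ht ω hω
    constructor
    · refine Set.mem_iInter₂.mp hω.1 t ?_
      simp only [Finset.mem_range]; omega
    · rcases Nat.eq_zero_or_pos t with h0 | h1
      · subst h0; rw [hR0]; exact hr
      · exact hω.2 t h1 le_rfl
  have hR_succ : ∀ t ω, R (t+1) ω = R t ω + Y (t+1) ω := by
    intro t ω
    rw [hR, hR, Finset.sum_Icc_succ_top (by omega : 1 ≤ t + 1)]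
    ring
  have hY_lb : ∀ i ω, (-1 : ℤ) ≤ Y i ω := by
    intro i ω
    have h := hY_range i ω
    simp only [Set.mem_insert_iff, Set.mem_singleton_iff] at h
    rcases h with h | h | h <;> omega
  have hR_lb : ∀ t ω, (r0 : ℤ) - t ≤ R t ω := by
    intro t ω
    rw [hR]
    have : (- t : ℤ) ≤ ∑ i ∈ Finset.Icc 1 t, Y i ω := by
      calc (-t : ℤ) = ∑ _i ∈ Finset.Icc 1 t, (-1 : ℤ) := by
            simp [Nat.Icc_eq_range', Finset.sum_const]
          _ ≤ _ := Finset.sum_le_sum fun i _ => hY_lb i ω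
    omega
  -- the exponential weight process
  set f : ℕ → Ω → ℝ := fun t ω =>
    Real.exp (-θ * ((R t ω : ℝ) - (r0 : ℝ))) * Set.indicator (A t) (fun _ => (1:ℝ)) ω
    with hfdef
  have hf_nonneg : ∀ t ω, 0 ≤ f t ω := by
    intro t ω
    refine mul_nonneg (Real.exp_nonneg _) ?_
    exact Set.indicator_nonneg (fun _ _ => zero_le_one) ω
  have hf_le : ∀ t ω, f t ω ≤ Real.exp (θ * t) := by
    intro t ω
    classical
    have hind : Set.indicator (A t) (fun _ => (1:ℝ)) ω ≤ 1 := by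
      by_cases h : ω ∈ A t <;> simp [h]
    have h' : -(t:ℝ) ≤ (R t ω : ℝ) - r0 := by
      have h2 : ((r0 - (t:ℕ) : ℤ) : ℝ) ≤ ((R t ω : ℤ) : ℝ) := by exact_mod_cast hR_lb t ω
      push_cast at h2; linarith
    have hexp : Real.exp (-θ * ((R t ω : ℝ) - r0)) ≤ Real.exp (θ * t) := by
      apply Real.exp_le_exp.mpr
      nlinarith [hθpos.le]
    calc f t ω ≤ Real.exp (-θ * ((R t ω : ℝ) - r0)) * 1 :=
          mul_le_mul_of_nonneg_left hind (Real.exp_nonneg _)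
      _ ≤ Real.exp (θ * t) := by rw [mul_one]; exact hexp
  have hf_meas : ∀ t, Measurable[φ t] (f t) := by
    intro t
    refine Measurable.mul ?_ (measurable_const.indicator (hA_mble t))
    refine Measurable.exp ?_
    refine Measurable.const_mul ?_ _
    exact (measurable_from_top.comp (hR_meas t)).sub measurable_const
  have hf_int : ∀ t, Integrable (f t) P := by
    intro t
    refine (integrable_const (Real.exp (θ * t))).mono'
      ((hf_meas t).mono (hφ_le t) le_rfl).aestronglyMeasurable
      (Filter.Eventually.of_forall fun ω => ?_)
    rw [Real.norm_eq_abs, abs_of_nonneg (hf_nonneg t ω)]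
    exact hf_le t ω
  have hstep : ∀ t, t < m → ∫ ω, f (t+1) ω ∂P ≤ ρ * ∫ ω, f t ω ∂P := by
    intro t htm
    have hG : φ t ≤ F := hφ_le t
    set h : Ω → ℝ := fun ω => Real.exp (-θ * (Y (t+1) ω : ℝ)) with hhdef
    have hYm : Measurable (Y (t+1)) := (hY_meas (t+1)).mono (hφ_le (t+1)) le_rfl
    have hh_meas : Measurable h := by
      refine Measurable.exp (Measurable.const_mul ?_ _)
      exact measurable_from_top.comp hYm
    have hh_nonneg : ∀ ω, 0 ≤ h ω := fun ω => Real.exp_nonneg _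
    have hh_bd : ∀ ω, |h ω| ≤ Real.exp θ := by
      intro ω
      rw [abs_of_nonneg (hh_nonneg ω)]
      apply Real.exp_le_exp.mpr
      have h1 : ((-1 : ℤ) : ℝ) ≤ ((Y (t+1) ω : ℤ) : ℝ) := by exact_mod_cast hY_lb (t+1) ω
      push_cast at h1
      nlinarith [hθpos.le]
    have hh_int : Integrable h P := (integrable_const (Real.exp θ)).mono'
      hh_meas.aestronglyMeasurable
      (Filter.Eventually.of_forall fun ω => by simpa [Real.norm_eq_abs] using hh_bd ω)
    -- pointwise: f (t+1) ≤ f t * h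
    have hpt : ∀ ω, f (t+1) ω ≤ (f t * h) ω := by
      intro ω
      classical
      by_cases hmem : ω ∈ A (t+1)
      · have hmem' : ω ∈ A t := hA_sub t hmem
        simp only [hfdef, hhdef, Pi.mul_apply, Set.indicator_of_mem hmem,
          Set.indicator_of_mem hmem', mul_one]
        rw [← Real.exp_add]
        apply le_of_eq
        congr 1
        have hc : ((R (t+1) ω : ℤ) : ℝ) = ((R t ω : ℤ) : ℝ) + ((Y (t+1) ω : ℤ) : ℝ) := by
          exact_mod_cast hR_succ t ω
        rw [hc]; ring
      · simp only [hfdef, Set.indicator_of_notMem hmem, mul_zero, Pi.mul_apply]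
        exact mul_nonneg (hf_nonneg t ω) (hh_nonneg ω)
    have hfh_int : Integrable (f t * h) P := by
      refine (integrable_const (Real.exp (θ * t) * Real.exp θ)).mono'
        (((hf_meas t).mono (hφ_le t) le_rfl).mul hh_meas).aestronglyMeasurable
        (Filter.Eventually.of_forall fun ω => ?_)
      rw [Real.norm_eq_abs, Pi.mul_apply, abs_mul, abs_of_nonneg (hf_nonneg t ω)]
      exact mul_le_mul (hf_le t ω) (hh_bd ω) (abs_nonneg _) (Real.exp_nonneg _)
    -- pull-out property
    have hpull : P[f t * h | φ t] =ᵐ[P] f t * P[h | φ t] :=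
      condExp_mul_of_stronglyMeasurable_left (hf_meas t).stronglyMeasurable hfh_int hh_int
    -- decomposition of h
    set I1 : Ω → ℝ := Set.indicator {ω' | Y (t+1) ω' = 1} (fun _ => (1 : ℝ)) with hI1def
    set I2 : Ω → ℝ := Set.indicator {ω' | Y (t+1) ω' = -1} (fun _ => (1 : ℝ)) with hI2def
    have hS1 : MeasurableSet {ω' | Y (t+1) ω' = 1} := hYm (measurableSet_singleton 1)
    have hS2 : MeasurableSet {ω' | Y (t+1) ω' = -1} := hYm (measurableSet_singleton (-1))
    have hI1_int : Integrable I1 P := (integrable_const (1:ℝ)).indicator hS1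
    have hI2_int : Integrable I2 P := (integrable_const (1:ℝ)).indicator hS2
    have hdecomp : h = (fun _ => (1:ℝ)) + (c1 • I1 + c2 • I2) := by
      funext ω
      have hy := hY_range (t+1) ω
      simp only [Set.mem_insert_iff, Set.mem_singleton_iff] at hy
      simp only [hhdef, hI1def, hI2def, Pi.add_apply, Pi.smul_apply, smul_eq_mul]
      rcases hy with hy | hy | hy <;>
        simp [Set.indicator_apply, Set.mem_setOf_eq, hy, hc1def, hc2def] <;> ring_nf <;> norm_num
    have hce : P[h|φ t] =ᵐ[P] fun ω => 1 + (c1 * (P[I1|φ t]) ω + c2 * (P[I2|φ t]) ω) := by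
      rw [hdecomp]
      have hsum_int : Integrable (c1 • I1 + c2 • I2) P := (hI1_int.smul c1).add (hI2_int.smul c2)
      refine (condExp_add (integrable_const 1) hsum_int (φ t)).trans ?_
      have e2 : P[c1 • I1 + c2 • I2|φ t] =ᵐ[P] P[c1 • I1|φ t] + P[c2 • I2|φ t] :=
        condExp_add (hI1_int.smul c1) (hI2_int.smul c2) (φ t)
      have e3 : P[c1 • I1|φ t] =ᵐ[P] c1 • P[I1|φ t] := condExp_smul c1 I1 (φ t)
      have e4 : P[c2 • I2|φ t] =ᵐ[P] c2 • P[I2|φ t] := condExp_smul c2 I2 (φ t)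
      have e5 : P[(fun _ => (1:ℝ))|φ t] = fun _ => (1:ℝ) := condExp_const hG 1
      filter_upwards [e2, e3, e4] with ω h2 h3 h4
      simp only [Pi.add_apply, e5, h2, h3, h4, Pi.smul_apply, smul_eq_mul]
    -- a.e. bound
    have hbound : ∀ᵐ ω ∂P, (f t * P[h|φ t]) ω ≤ ρ * f t ω := by
      have hu := hup (t+1) (by omega) (by omega)
      have hd := hdown (t+1) (by omega) (by omega)
      simp only [Nat.add_sub_cancel] at hu hd
      filter_upwards [hce, hu, hd] with ω hω hωu hωd
      classical
      by_cases hmem : ω ∈ A t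
      · have hEt := hA_mem t htm ω hmem
        have h1 : 2 * p ≤ (P[I1|φ t]) ω := hωu hEt
        have h2 : (P[I2|φ t]) ω ≤ p := hωd hEt
        have h3 : (P[h|φ t]) ω ≤ ρ := by
          rw [hω, hρdef]
          have b1 : c1 * (P[I1|φ t]) ω ≤ c1 * (2*p) := by nlinarith
          have b2 : c2 * (P[I2|φ t]) ω ≤ c2 * p := by nlinarith
          linarith
        have h4 := hf_nonneg t ω
        simp only [Pi.mul_apply]
        nlinarith
      · have hz : f t ω = 0 := by simp [hfdef, Set.indicator_of_notMem hmem]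
        simp [Pi.mul_apply, hz]
    have hce_int : Integrable (f t * P[h|φ t]) P := integrable_condExp.congr hpull
    calc ∫ ω, f (t+1) ω ∂P ≤ ∫ ω, (f t * h) ω ∂P :=
          integral_mono (hf_int (t+1)) hfh_int hpt
      _ = ∫ ω, (P[f t * h|φ t]) ω ∂P := (integral_condExp hG).symm
      _ = ∫ ω, (f t * P[h|φ t]) ω ∂P := integral_congr_ae hpull
      _ ≤ ∫ ω, ρ * f t ω ∂P := integral_mono_ae hce_int ((hf_int t).const_mul ρ) hbound
      _ = ρ * ∫ ω, f t ω ∂P := integral_const_mul ρ _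
  -- iterate
  have hiter : ∀ t, t ≤ m → ∫ ω, f t ω ∂P ≤ ρ ^ t := by
    intro t
    induction t with
    | zero =>
      intro _
      have hle1 : ∀ ω, f 0 ω ≤ 1 := by
        intro ω
        have h := hf_le 0 ω
        simpa using h
      calc ∫ ω, f 0 ω ∂P ≤ ∫ _ω, (1:ℝ) ∂P := integral_mono (hf_int 0) (integrable_const 1) hle1
        _ = 1 := by simp
        _ = ρ ^ 0 := (pow_zero ρ).symm
    | succ t ih =>
      intro ht
      have h1 := hstep t (by omega)
      have h2 := ih (by omega)
      calc ∫ ω, f (t+1) ω ∂P ≤ ρ * ∫ ω, f t ω ∂P := h1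
        _ ≤ ρ * ρ ^ t := by nlinarith
        _ = ρ ^ (t+1) := by ring
  -- the target event is A m
  have hgoal_eq : ((⋂ i ∈ Finset.range m, E i) ∩ {ω | ∀ t, 1 ≤ t → t ≤ m → R t ω < r1}) = A m := by
    simp only [hAdef]
    rw [min_eq_right (by omega : m ≤ m + 1)]
  -- lower bound on the final integral
  set x : ℝ := θ * ((r1:ℝ) - r0) with hxdef
  have hkey : (P (A m)).toReal * Real.exp (-x) ≤ ∫ ω, f m ω ∂P := by
    classical
    have hAmble : MeasurableSet (A m) := (hφ_le m) _ (hA_mble m)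
    have hpt : ∀ ω, Set.indicator (A m) (fun _ => Real.exp (-x)) ω ≤ f m ω := by
      intro ω
      by_cases hmem : ω ∈ A m
      · rw [Set.indicator_of_mem hmem]
        simp only [hfdef, Set.indicator_of_mem hmem, mul_one]
        apply Real.exp_le_exp.mpr
        have hlt : R m ω < r1 := hmem.2 m hm1 le_rfl
        have hle : ((R m ω : ℤ) : ℝ) ≤ ((r1 : ℤ) : ℝ) := by exact_mod_cast le_of_lt hlt
        rw [hxdef]
        nlinarith [hθpos.le]
      · rw [Set.indicator_of_notMem hmem]
        exact hf_nonneg m ω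
    have hii : ∫ ω, Set.indicator (A m) (fun _ => Real.exp (-x)) ω ∂P
        = (P (A m)).toReal * Real.exp (-x) := by
      rw [integral_indicator_const _ hAmble, smul_eq_mul, measureReal_def]
    rw [← hii]
    exact integral_mono ((integrable_const _).indicator hAmble) (hf_int m) hpt
  -- assemble the real-valued bound
  have hρe : ρ ≤ Real.exp (ρ - 1) := by
    have := Real.add_one_le_exp (ρ - 1); linarith
  have h2 : ρ ^ m ≤ Real.exp ((ρ - 1) * m) := by
    calc ρ ^ m ≤ (Real.exp (ρ - 1)) ^ m := pow_le_pow_left₀ hρ0 hρe m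
      _ = Real.exp ((ρ - 1) * m) := by rw [← Real.exp_nat_mul, mul_comm]
  have h6 : (P (A m)).toReal * Real.exp (-x) ≤ Real.exp ((ρ - 1) * m) :=
    le_trans hkey (le_trans (hiter m le_rfl) h2)
  have hxcancel : Real.exp (-x) * Real.exp x = 1 := by
    rw [← Real.exp_add, neg_add_cancel, Real.exp_zero]
  have h7 : (P (A m)).toReal ≤ Real.exp ((ρ - 1) * m + x) := by
    rw [Real.exp_add]
    have h8 := mul_le_mul_of_nonneg_right h6 (Real.exp_nonneg x)
    calc (P (A m)).toReal = (P (A m)).toReal * (Real.exp (-x) * Real.exp x) := by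
          rw [hxcancel, mul_one]
      _ = (P (A m)).toReal * Real.exp (-x) * Real.exp x := by ring
      _ ≤ Real.exp ((ρ - 1) * m) * Real.exp x := h8
  -- exponent arithmetic
  have hpm0 : 0 ≤ p * m := le_trans (by linarith) hpm
  have hcoef : 2 * c1 + c2 ≤ -(3/28) := by
    rw [hc1def, hc2def, hθdef]
    linarith [exp_num]
  have hexp_le : (ρ - 1) * m + x ≤ -(p * m) / 28 := by
    have hρ1 : ρ - 1 = p * (2 * c1 + c2) := by rw [hρdef]; ring
    have h_a : x ≤ (1/14) * (p * m) := by
      rw [hxdef, hθdef]; linarith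
    have h_b : (p * m) * (2 * c1 + c2) ≤ (p * m) * (-(3/28)) :=
      mul_le_mul_of_nonneg_left hcoef hpm0
    rw [hρ1]
    nlinarith [h_a, h_b]
  rw [hgoal_eq]
  refine (ENNReal.le_ofReal_iff_toReal_le (measure_ne_top P _) (Real.exp_nonneg _)).mpr ?_
  exact le_trans h7 (Real.exp_le_exp.mpr hexp_le)
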